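/- Let H be a complex Hilbert space, and let A₀, A₁, B₀, B₁, C₀, C₁ be self-adjoint bounded operators on H with -I ≤ Aᵢ ≤ I, -I ≤ Bᵢ ≤ I, -I ≤ Cᵢ ≤ I, such that the Aᵢ commute with the Bⱼ and Cⱼ, and the Bᵢ commute with the Cⱼ. Let τ be a state on B(H) satisfying τ(A·C) = τ(A)·τ(C) for all A in the von Neumann algebra generated by A₀,A₁ and C in the von Neumann algebra generated by C₀,C₁. Then √|τ((A₀+A₁)B₀(C₀+C₁))| + √|τ((A₀-A₁)B₁(C₀-C₁))| ≤ 2√2. -/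

import Mathlib

set_option maxHeartbeats 1000000

section Aux

lemma my_sq_le_one {A : Type*} [CStarAlgebra A] [PartialOrder A] [StarOrderedRing A]
    {b : A} (hb : IsSelfAdjoint b) (h₁ : -1 ≤ b) (h₂ : b ≤ 1) : b * b ≤ 1 := by
  have hsp1 : ∀ x ∈ spectrum ℝ b, x ≤ 1 := by
    rw [← CFC.le_one_iff (R := ℝ) b hb]; exact h₂
  have hsp2 : ∀ x ∈ spectrum ℝ b, (-1 : ℝ) ≤ x := by
    refine (algebraMap_le_iff_le_spectrum (R := ℝ) (r := (-1 : ℝ)) (a := b) hb).mp ?_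
    rw [map_neg, map_one]; exact h₁
  have key : b * b = cfc (fun x : ℝ => x * x) b := by
    rw [cfc_mul (fun x : ℝ => x) (fun x : ℝ => x) b, cfc_id' ℝ b]
  rw [key]
  exact cfc_le_one _ _ fun x hx => by nlinarith [hsp1 x hx, hsp2 x hx]

lemma my_sqrt_add_le {x y : ℝ} (hx : 0 ≤ x) (hy : 0 ≤ y) (h : x + y ≤ 4) :
    Real.sqrt x + Real.sqrt y ≤ 2 * Real.sqrt 2 := by
  have h8 : (Real.sqrt x + Real.sqrt y) ^ 2 ≤ 8 := by
    nlinarith [Real.sq_sqrt hx, Real.sq_sqrt hy, sq_nonneg (Real.sqrt x - Real.sqrt y),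
      Real.sqrt_nonneg x, Real.sqrt_nonneg y]
  calc Real.sqrt x + Real.sqrt y = Real.sqrt ((Real.sqrt x + Real.sqrt y) ^ 2) :=
        (Real.sqrt_sq (by positivity)).symm
    _ ≤ Real.sqrt 8 := Real.sqrt_le_sqrt h8
    _ = 2 * Real.sqrt 2 := by
        rw [show (8 : ℝ) = 2 ^ 2 * 2 by norm_num, Real.sqrt_mul (by positivity),
          Real.sqrt_sq (by norm_num)]

variable {H : Type*} [NormedAddCommGroup H] [InnerProductSpace ℂ H] [CompleteSpace H]

lemma my_tau_im (τ : (H →L[ℂ] H) →ₗ[ℂ] ℂ)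
    (hτpos : ∀ T : H →L[ℂ] H, 0 ≤ T → ∃ r : ℝ, 0 ≤ r ∧ τ T = (r : ℂ))
    {S : H →L[ℂ] H} (hS : IsSelfAdjoint S) : (τ S).im = 0 := by
  obtain ⟨r₁, _, hr₁⟩ := hτpos 1 (by simpa using star_mul_self_nonneg (1 : H →L[ℂ] H))
  obtain ⟨r, _, hr⟩ := hτpos (algebraMap ℝ _ ‖S‖ - S)
    (sub_nonneg.mpr hS.le_algebraMap_norm_self)
  have halg : (algebraMap ℝ (H →L[ℂ] H) ‖S‖) = ((‖S‖ : ℂ) • 1 : H →L[ℂ] H) := by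
    rw [IsScalarTower.algebraMap_apply ℝ ℂ (H →L[ℂ] H), Complex.coe_algebraMap,
      Algebra.algebraMap_eq_smul_one]
  rw [map_sub, halg, map_smul, hr₁, smul_eq_mul] at hr
  have hτS : τ S = (‖S‖ : ℂ) * r₁ - r := by linear_combination -hr
  simp [hτS]

lemma my_tau_star (τ : (H →L[ℂ] H) →ₗ[ℂ] ℂ)
    (hτpos : ∀ T : H →L[ℂ] H, 0 ≤ T → ∃ r : ℝ, 0 ≤ r ∧ τ T = (r : ℂ))
    (X : H →L[ℂ] H) : τ (star X) = starRingEnd ℂ (τ X) := by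
  set s : H →L[ℂ] H := ((1 : ℂ)/2) • (X + star X) with hs_def
  set t : H →L[ℂ] H := (Complex.I/2) • (star X - X) with ht_def
  have hs : IsSelfAdjoint s := by
    rw [IsSelfAdjoint, hs_def, star_smul, star_add, star_star]
    simp only [Complex.star_def, map_div₀, map_one, map_ofNat]
    module
  have ht : IsSelfAdjoint t := by
    rw [IsSelfAdjoint, ht_def, star_smul, star_sub, star_star]
    simp only [Complex.star_def, map_div₀, Complex.conj_I, map_ofNat]
    module
  have h2 : Complex.I * (Complex.I / 2) = -(1/2 : ℂ) := by
    rw [div_eq_mul_inv, ← mul_assoc, Complex.I_mul_I]; ring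
  have hX : X = s + Complex.I • t := by
    rw [hs_def, ht_def, smul_smul, h2]; module
  have hXstar : star X = s - Complex.I • t := by
    rw [hs_def, ht_def, smul_smul, h2]; module
  have h1 : starRingEnd ℂ (τ s) = τ s :=
    Complex.conj_eq_iff_im.mpr (my_tau_im τ hτpos hs)
  have h2' : starRingEnd ℂ (τ t) = τ t :=
    Complex.conj_eq_iff_im.mpr (my_tau_im τ hτpos ht)
  calc τ (star X) = τ s - Complex.I * τ t := by
        rw [hXstar, map_sub, map_smul τ Complex.I t, smul_eq_mul]
    _ = starRingEnd ℂ (τ s + Complex.I * τ t) := by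
        rw [map_add, map_mul, Complex.conj_I, h1, h2']; ring
    _ = starRingEnd ℂ (τ X) := by
        rw [← smul_eq_mul, ← map_smul τ Complex.I t, ← map_add, ← hX]

lemma my_tau_cs (τ : (H →L[ℂ] H) →ₗ[ℂ] ℂ)
    (hτpos : ∀ T : H →L[ℂ] H, 0 ≤ T → ∃ r : ℝ, 0 ≤ r ∧ τ T = (r : ℂ))
    (X Y : H →L[ℂ] H) :
    ‖τ (star X * Y)‖ ^ 2 ≤ (τ (star X * X)).re * (τ (star Y * Y)).re := by
  obtain ⟨rx, hrx0, hrx⟩ := hτpos (star X * X) (star_mul_self_nonneg X)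
  obtain ⟨ry, hry0, hry⟩ := hτpos (star Y * Y) (star_mul_self_nonneg Y)
  set p := τ (star X * Y) with hp_def
  have hyx : τ (star Y * X) = starRingEnd ℂ p := by
    rw [hp_def, ← my_tau_star τ hτpos (star X * Y), star_mul, star_star]
  have expand : ∀ c : ℂ, τ (star (c • X + Y) * (c • X + Y)) =
      (starRingEnd ℂ c * c) * τ (star X * X) + starRingEnd ℂ c * τ (star X * Y)
        + c * τ (star Y * X) + τ (star Y * Y) := by
    intro c
    have hop : star (c • X + Y) * (c • X + Y) =
        (starRingEnd ℂ c * c) • (star X * X) + starRingEnd ℂ c • (star X * Y)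
          + c • (star Y * X) + star Y * Y := by
      simp only [star_add, star_smul, Complex.star_def, add_mul, mul_add, smul_mul_assoc,
        mul_smul_comm, smul_smul]
      module
    rw [hop, map_add, map_add, map_add, map_smul, map_smul, map_smul, smul_eq_mul,
      smul_eq_mul, smul_eq_mul]
  rw [hrx, hry]
  simp only [Complex.ofReal_re]
  by_cases hp : p = 0
  · rw [hp]
    simpa using mul_nonneg hrx0 hry0
  have key : ∀ u : ℝ, 0 ≤ (Complex.normSq p * rx) * (u * u) + (2 * Complex.normSq p) * u + ry := by
    intro u
    obtain ⟨r, hr0, hr⟩ := hτpos _ (star_mul_self_nonneg (((u : ℂ) * p) • X + Y))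
    have h := expand ((u : ℂ) * p)
    rw [hr, hrx, hry, hyx, ← hp_def] at h
    have hpp : p * starRingEnd ℂ p = (Complex.normSq p : ℂ) := Complex.mul_conj p
    have h2 : (r : ℂ) = (((Complex.normSq p * rx) * (u * u) + (2 * Complex.normSq p) * u + ry : ℝ) : ℂ) := by
      rw [h, map_mul, Complex.conj_ofReal]
      push_cast
      linear_combination ((u : ℂ) * u * rx + 2 * u) * hpp
    have h3 : r = (Complex.normSq p * rx) * (u * u) + (2 * Complex.normSq p) * u + ry := by
      exact_mod_cast h2
    linarith [hr0, h3.symm.le, h3.le]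
  have hd := discrim_le_zero key
  rw [discrim] at hd
  have hnorm : 0 < Complex.normSq p := Complex.normSq_pos.mpr hp
  rw [Complex.sq_norm]
  have h' : Complex.normSq p * Complex.normSq p ≤ Complex.normSq p * (rx * ry) := by nlinarith
  exact le_of_mul_le_mul_left h' hnorm

end Aux

/-- Theorem 1 (bilocal inequality bound `2√2`) in the ternary mutually-commuting
von Neumann algebra model of entanglement swapping networks, stated on `B(H)`. -/
theorem bilocal_le_two_sqrt_two
    {H : Type*} [NormedAddCommGroup H] [InnerProductSpace ℂ H] [CompleteSpace H]
    (A₀ A₁ B₀ B₁ C₀ C₁ : H →L[ℂ] H)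
    (hA₀ : IsSelfAdjoint A₀) (hA₁ : IsSelfAdjoint A₁)
    (hB₀ : IsSelfAdjoint B₀) (hB₁ : IsSelfAdjoint B₁)
    (hC₀ : IsSelfAdjoint C₀) (hC₁ : IsSelfAdjoint C₁)
    (hA₀le : -1 ≤ A₀ ∧ A₀ ≤ 1) (hA₁le : -1 ≤ A₁ ∧ A₁ ≤ 1)
    (hB₀le : -1 ≤ B₀ ∧ B₀ ≤ 1) (hB₁le : -1 ≤ B₁ ∧ B₁ ≤ 1)
    (hC₀le : -1 ≤ C₀ ∧ C₀ ≤ 1) (hC₁le : -1 ≤ C₁ ∧ C₁ ≤ 1)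
    (hAcomm : ∀ X ∈ ({A₀, A₁} : Set (H →L[ℂ] H)),
      ∀ Y ∈ ({B₀, B₁, C₀, C₁} : Set (H →L[ℂ] H)), Commute X Y)
    (hBCcomm : ∀ X ∈ ({B₀, B₁} : Set (H →L[ℂ] H)),
      ∀ Y ∈ ({C₀, C₁} : Set (H →L[ℂ] H)), Commute X Y)
    (τ : (H →L[ℂ] H) →ₗ[ℂ] ℂ)
    (hτpos : ∀ T : H →L[ℂ] H, 0 ≤ T → ∃ r : ℝ, 0 ≤ r ∧ τ T = (r : ℂ))
    (hτone : τ 1 = 1)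
    -- independence: τ factorizes on the von Neumann algebras (double commutants)
    -- generated by `A₀, A₁` and by `C₀, C₁`
    (hind : ∀ A ∈ Set.centralizer (Set.centralizer ({A₀, A₁} : Set (H →L[ℂ] H))),
      ∀ C ∈ Set.centralizer (Set.centralizer ({C₀, C₁} : Set (H →L[ℂ] H))),
        τ (A * C) = τ A * τ C) :
    Real.sqrt ‖τ ((A₀ + A₁) * B₀ * (C₀ + C₁))‖ +
      Real.sqrt ‖τ ((A₀ - A₁) * B₁ * (C₀ - C₁))‖ ≤ 2 * Real.sqrt 2 := by
  have hXp : IsSelfAdjoint (A₀ + A₁) := hA₀.add hA₁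
  have hXm : IsSelfAdjoint (A₀ - A₁) := hA₀.sub hA₁
  have hYp : IsSelfAdjoint (C₀ + C₁) := hC₀.add hC₁
  have hYm : IsSelfAdjoint (C₀ - C₁) := hC₀.sub hC₁
  -- monotonicity of the real part of τ
  have mono : ∀ S T : H →L[ℂ] H, S ≤ T → (τ S).re ≤ (τ T).re := by
    intro S T h
    obtain ⟨r, hr0, hr⟩ := hτpos (T - S) (sub_nonneg.mpr h)
    rw [map_sub] at hr
    have := congrArg Complex.re hr
    simp only [Complex.sub_re, Complex.ofReal_re] at this
    linarith
  -- nonnegativity of τ (star S * S)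
  have nn : ∀ S : H →L[ℂ] H, 0 ≤ (τ (star S * S)).re := by
    intro S
    obtain ⟨r, hr0, hr⟩ := hτpos _ (star_mul_self_nonneg S)
    rw [hr]; simpa using hr0
  -- squares are dominated by one
  have hA0sq : A₀ * A₀ ≤ 1 := my_sq_le_one hA₀ hA₀le.1 hA₀le.2
  have hA1sq : A₁ * A₁ ≤ 1 := my_sq_le_one hA₁ hA₁le.1 hA₁le.2
  have hB0sq : B₀ * B₀ ≤ 1 := my_sq_le_one hB₀ hB₀le.1 hB₀le.2
  have hB1sq : B₁ * B₁ ≤ 1 := my_sq_le_one hB₁ hB₁le.1 hB₁le.2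
  have hC0sq : C₀ * C₀ ≤ 1 := my_sq_le_one hC₀ hC₀le.1 hC₀le.2
  have hC1sq : C₁ * C₁ ≤ 1 := my_sq_le_one hC₁ hC₁le.1 hC₁le.2
  -- sums of squared means are at most 4
  have hτfour : (τ ((1 + 1) + (1 + 1) : H →L[ℂ] H)).re = 4 := by
    simp [map_add, hτone]
    norm_num
  have hsum : ∀ P Q : H →L[ℂ] H, IsSelfAdjoint P → IsSelfAdjoint Q →
      P * P ≤ 1 → Q * Q ≤ 1 →
      (τ (star (P + Q) * (P + Q))).re + (τ (star (P - Q) * (P - Q))).re ≤ 4 := by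
    intro P Q hP hQ hPsq hQsq
    have hop : star (P + Q) * (P + Q) + star (P - Q) * (P - Q) ≤
        ((1 + 1) + (1 + 1) : H →L[ℂ] H) := by
      have e : star (P + Q) * (P + Q) + star (P - Q) * (P - Q) =
          (P * P + P * P) + (Q * Q + Q * Q) := by
        rw [(hP.add hQ).star_eq, (hP.sub hQ).star_eq]; noncomm_ring
      rw [e]
      exact add_le_add (add_le_add hPsq hPsq) (add_le_add hQsq hQsq)
    have h := mono _ _ hop
    rw [map_add, Complex.add_re] at h
    linarith [hτfour ▸ h]
  have hsumA := hsum A₀ A₁ hA₀ hA₁ hA0sq hA1sq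
  have hsumC := hsum C₀ C₁ hC₀ hC₁ hC0sq hC1sq
  -- conjugation bound
  have hconj : ∀ B Y : H →L[ℂ] H, IsSelfAdjoint B → B * B ≤ 1 →
      (τ (star (B * Y) * (B * Y))).re ≤ (τ (star Y * Y)).re := by
    intro B Y hB hBB
    apply mono
    have h := star_left_conjugate_nonneg (sub_nonneg.mpr hBB) Y
    have e : star Y * (1 - B * B) * Y = star Y * Y - star (B * Y) * (B * Y) := by
      rw [star_mul, hB.star_eq]; noncomm_ring
    rw [e] at h
    exact sub_nonneg.mp h
  -- Cauchy–Schwarz bounds for the two terms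
  have hI : ‖τ ((A₀ + A₁) * B₀ * (C₀ + C₁))‖ ^ 2 ≤
      (τ (star (A₀ + A₁) * (A₀ + A₁))).re * (τ (star (C₀ + C₁) * (C₀ + C₁))).re := by
    have h := my_tau_cs τ hτpos (A₀ + A₁) (B₀ * (C₀ + C₁))
    rw [show star (A₀ + A₁) * (B₀ * (C₀ + C₁)) = (A₀ + A₁) * B₀ * (C₀ + C₁) by
      rw [hXp.star_eq, mul_assoc]] at h
    exact h.trans (mul_le_mul_of_nonneg_left (hconj B₀ (C₀ + C₁) hB₀ hB0sq) (nn (A₀ + A₁)))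
  have hJ : ‖τ ((A₀ - A₁) * B₁ * (C₀ - C₁))‖ ^ 2 ≤
      (τ (star (A₀ - A₁) * (A₀ - A₁))).re * (τ (star (C₀ - C₁) * (C₀ - C₁))).re := by
    have h := my_tau_cs τ hτpos (A₀ - A₁) (B₁ * (C₀ - C₁))
    rw [show star (A₀ - A₁) * (B₁ * (C₀ - C₁)) = (A₀ - A₁) * B₁ * (C₀ - C₁) by
      rw [hXm.star_eq, mul_assoc]] at h
    exact h.trans (mul_le_mul_of_nonneg_left (hconj B₁ (C₀ - C₁) hB₁ hB1sq) (nn (A₀ - A₁)))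
  -- real abbreviations
  set aP := (τ (star (A₀ + A₁) * (A₀ + A₁))).re with haP
  set aM := (τ (star (A₀ - A₁) * (A₀ - A₁))).re with haM
  set cP := (τ (star (C₀ + C₁) * (C₀ + C₁))).re with hcP
  set cM := (τ (star (C₀ - C₁) * (C₀ - C₁))).re with hcM
  have haP0 : 0 ≤ aP := nn _
  have haM0 : 0 ≤ aM := nn _
  have hcP0 : 0 ≤ cP := nn _
  have hcM0 : 0 ≤ cM := nn _
  -- bound each absolute value by the arithmetic mean
  have habs : ∀ (z : ℂ) (a c : ℝ), 0 ≤ a → 0 ≤ c → ‖z‖ ^ 2 ≤ a * c →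
      ‖z‖ ≤ (a + c) / 2 := by
    intro z a c ha hc h
    have h1 : ‖z‖ ≤ Real.sqrt (a * c) := by
      rw [← Real.sqrt_sq (norm_nonneg z)]
      exact Real.sqrt_le_sqrt h
    have h2 : Real.sqrt (a * c) ≤ (a + c) / 2 := by
      rw [Real.sqrt_mul ha]
      nlinarith [sq_nonneg (Real.sqrt a - Real.sqrt c), Real.sq_sqrt ha, Real.sq_sqrt hc,
        Real.sqrt_nonneg a, Real.sqrt_nonneg c]
    linarith
  have hIa : ‖τ ((A₀ + A₁) * B₀ * (C₀ + C₁))‖ ≤ (aP + cP) / 2 :=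
    habs _ _ _ haP0 hcP0 hI
  have hJa : ‖τ ((A₀ - A₁) * B₁ * (C₀ - C₁))‖ ≤ (aM + cM) / 2 :=
    habs _ _ _ haM0 hcM0 hJ
  calc Real.sqrt ‖τ ((A₀ + A₁) * B₀ * (C₀ + C₁))‖ +
        Real.sqrt ‖τ ((A₀ - A₁) * B₁ * (C₀ - C₁))‖
      ≤ Real.sqrt ((aP + cP) / 2) + Real.sqrt ((aM + cM) / 2) :=
        add_le_add (Real.sqrt_le_sqrt hIa) (Real.sqrt_le_sqrt hJa)
    _ ≤ 2 * Real.sqrt 2 := my_sqrt_add_le (by positivity) (by positivity) (by linarith)
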